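/- arXiv:2407.12215 — 4 statements merged into one kernel-verified Lean document; each statement's English description precedes it below -/
import Mathlib

section
/- Let F be a field, p a prime, and suppose there exist nonzero scalars m_{i,j} ∈ F for i ∈ Fin(p+1), j ∈ Fin(p+1) with j ≠ i, a basis (h_1, ..., h_{p+1}) of F^(p+1), vectors g_1, ..., g_{p+1} with g_i = Σ_{j ≠ i} m_{i,j} h_j, nonzero scalars a_i, b_i with h* := a_i h_i + b_i g_i independent of i (the same vector h* for all i), and nonzero scalars c_2, ..., c_{p+1} with g_1 = Σ_{i=2}^{p+1} c_i g_i. Then char F = p. -/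
/-- Scalar necessity direction for the class p-Fano matroid: if a basis h of F^(p+1),
vectors g_i = Σ_{j≠i} m_{i,j} h_j (all m_{i,j} ≠ 0), a common vector h* = a_i h_i + b_i g_i
(all a_i, b_i ≠ 0), and a nonzero-coefficient relation g_1 = Σ_{i≥2} c_i g_i exist,
then char F = p. -/
theorem pFano_representation_forces_char (F : Type*) [Field F] (p : ℕ) (hp : p.Prime)
    (m : Fin (p + 1) → Fin (p + 1) → F) (hm : ∀ i j, j ≠ i → m i j ≠ 0)
    (h : Fin (p + 1) → Fin (p + 1) → F)
    (hli : LinearIndependent F h) (hspan : Submodule.span F (Set.range h) = ⊤)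
    (g : Fin (p + 1) → Fin (p + 1) → F)
    (hg : ∀ i, g i = ∑ j ∈ Finset.univ.erase i, m i j • h j)
    (a b : Fin (p + 1) → F) (ha : ∀ i, a i ≠ 0) (hb : ∀ i, b i ≠ 0)
    (hstar : Fin (p + 1) → F) (hhs : ∀ i, a i • h i + b i • g i = hstar)
    (c : Fin (p + 1) → F) (hc : ∀ i, i ≠ 0 → c i ≠ 0)
    (hg1 : g 0 = ∑ i ∈ Finset.univ.erase 0, c i • g i) :
    ringChar F = p := by
  classical
  -- coefficient extraction from linear independence
  have key : ∀ u v : Fin (p+1) → F,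
      (∑ j, u j • h j) = (∑ j, v j • h j) → ∀ j, u j = v j := by
    intro u v huv j
    have h0 : ∑ j, (u j - v j) • h j = 0 := by
      simp only [sub_smul, Finset.sum_sub_distrib, huv, sub_self]
    have := (Fintype.linearIndependent_iff.mp hli) (fun j => u j - v j) h0 j
    exact sub_eq_zero.mp this
  set t : Fin (p+1) → Fin (p+1) → F :=
    fun i j => if j = i then a i else b i * m i j with ht
  have hrep : ∀ i, hstar = ∑ j, t i j • h j := by
    intro i
    rw [← hhs i, hg i, Finset.smul_sum,
      ← Finset.add_sum_erase _ (fun j => t i j • h j) (Finset.mem_univ i)]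
    congr 1
    · simp [ht]
    · apply Finset.sum_congr rfl
      intro j hj
      have hji : j ≠ i := Finset.ne_of_mem_erase hj
      simp [ht, hji, smul_smul]
  have hta : ∀ i j, t i j = a j := by
    intro i j
    have := key _ _ ((hrep i).symm.trans (hrep j)) j
    simpa [ht] using this
  have hstar_rep : hstar = ∑ j, a j • h j := by
    rw [hrep 0]
    exact Finset.sum_congr rfl fun j _ => by rw [hta 0 j]
  -- express g i in the basis
  have hginv : ∀ i, g i = ∑ j, (if j = i then 0 else (b i)⁻¹ * a j) • h j := by
    intro i
    have h1 : b i • g i = hstar - a i • h i := by rw [← hhs i]; abel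
    have h2 : g i = (b i)⁻¹ • (hstar - a i • h i) := by
      rw [← h1, smul_smul, inv_mul_cancel₀ (hb i), one_smul]
    have S2 : hstar - a i • h i = ∑ j ∈ Finset.univ.erase i, a j • h j := by
      rw [hstar_rep, ← Finset.add_sum_erase _ (fun j => a j • h j) (Finset.mem_univ i)]
      abel
    have S1 : ∑ j, (if j = i then (0:F) else (b i)⁻¹ * a j) • h j
        = (b i)⁻¹ • ∑ j ∈ Finset.univ.erase i, a j • h j := by
      rw [← Finset.add_sum_erase _
        (fun j => (if j = i then (0:F) else (b i)⁻¹ * a j) • h j) (Finset.mem_univ i),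
        Finset.smul_sum]
      rw [if_pos rfl, zero_smul, zero_add]
      apply Finset.sum_congr rfl
      intro j hj
      have hji : j ≠ i := Finset.ne_of_mem_erase hj
      simp [hji, smul_smul]
    rw [h2, S2, S1]
  -- coefficient identity from hg1
  have hmain : ∀ j, (if j = 0 then (0:F) else (b 0)⁻¹ * a j)
      = ∑ i ∈ Finset.univ.erase 0, c i * (if j = i then 0 else (b i)⁻¹ * a j) := by
    intro j
    refine key (fun j => if j = 0 then (0:F) else (b 0)⁻¹ * a j)
      (fun j => ∑ i ∈ Finset.univ.erase 0, c i * (if j = i then 0 else (b i)⁻¹ * a j)) ?_ j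
    rw [← hginv 0, hg1]
    calc ∑ i ∈ Finset.univ.erase 0, c i • g i
        = ∑ i ∈ Finset.univ.erase 0,
            ∑ j, (c i * (if j = i then 0 else (b i)⁻¹ * a j)) • h j := by
          refine Finset.sum_congr rfl fun i _ => ?_
          rw [hginv i, Finset.smul_sum]
          simp [smul_smul]
      _ = ∑ j, ∑ i ∈ Finset.univ.erase 0,
            (c i * (if j = i then 0 else (b i)⁻¹ * a j)) • h j := Finset.sum_comm
      _ = ∑ j, (∑ i ∈ Finset.univ.erase 0,
            c i * (if j = i then 0 else (b i)⁻¹ * a j)) • h j := by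
          refine Finset.sum_congr rfl fun j _ => ?_
          rw [Finset.sum_smul]
  -- the sum of c i / b i vanishes
  have hS : ∑ i ∈ Finset.univ.erase 0, c i * (b i)⁻¹ = 0 := by
    have h0 : (0:F) = ∑ i ∈ Finset.univ.erase 0, c i * ((b i)⁻¹ * a 0) := by
      have h0' := hmain 0
      rw [if_pos rfl] at h0'
      rw [h0']
      refine Finset.sum_congr rfl fun i hi => ?_
      have hne : (0 : Fin (p+1)) ≠ i := (Finset.ne_of_mem_erase hi).symm
      rw [if_neg hne]
    have h1 : (∑ i ∈ Finset.univ.erase 0, c i * (b i)⁻¹) * a 0 = 0 := by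
      rw [Finset.sum_mul,
        show ∑ i ∈ Finset.univ.erase 0, c i * (b i)⁻¹ * a 0
            = ∑ i ∈ Finset.univ.erase 0, c i * ((b i)⁻¹ * a 0) from
          Finset.sum_congr rfl fun i _ => by ring]
      exact h0.symm
    exact (mul_eq_zero.mp h1).resolve_right (ha 0)
  have hcb : ∀ j : Fin (p+1), j ≠ 0 → c j * (b j)⁻¹ = -(b 0)⁻¹ := by
    intro j hj
    have hmem : j ∈ Finset.univ.erase 0 := Finset.mem_erase.mpr ⟨hj, Finset.mem_univ j⟩
    have hmj := hmain j
    rw [if_neg hj, ← Finset.add_sum_erase _ _ hmem] at hmj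
    rw [if_pos rfl, mul_zero, zero_add] at hmj
    have hmj' : (b 0)⁻¹ * a j
        = (∑ i ∈ (Finset.univ.erase 0).erase j, c i * (b i)⁻¹) * a j := by
      rw [hmj, Finset.sum_mul]
      refine Finset.sum_congr rfl fun i hi => ?_
      have hji : j ≠ i := (Finset.ne_of_mem_erase hi).symm
      rw [if_neg hji, mul_assoc]
    have hsum : ∑ i ∈ (Finset.univ.erase 0).erase j, c i * (b i)⁻¹
        = -(c j * (b j)⁻¹) := by
      have h2 : c j * (b j)⁻¹ + ∑ i ∈ (Finset.univ.erase 0).erase j, c i * (b i)⁻¹ = 0 := by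
        rw [Finset.add_sum_erase _ (fun i => c i * (b i)⁻¹) hmem]; exact hS
      linear_combination h2
    rw [hsum] at hmj'
    have := mul_right_cancel₀ (ha j) hmj'
    linear_combination this
  have hcard : (Finset.univ.erase (0 : Fin (p+1))).card = p := by
    rw [Finset.card_erase_of_mem (Finset.mem_univ _), Finset.card_univ, Fintype.card_fin]
    simp
  have hSval : ∑ i ∈ Finset.univ.erase 0, c i * (b i)⁻¹ = (p : F) * (-(b 0)⁻¹) := by
    rw [Finset.sum_congr rfl (fun i hi => hcb i (Finset.ne_of_mem_erase hi)),
      Finset.sum_const, hcard, nsmul_eq_mul]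
  have hpz : (p : F) = 0 := by
    have hmul : (p:F) * (-(b 0)⁻¹) = 0 := by rw [← hSval, hS]
    rcases mul_eq_zero.mp hmul with h1 | h2
    · exact h1
    · exact absurd (neg_eq_zero.mp h2) (inv_ne_zero (hb 0))
  exact CharP.ringChar_of_prime_eq_zero hp hpz
end

section
/- Let F be a field, p a prime, and suppose there exist nonzero scalars m_{i,j} ∈ F for i ∈ Fin(p+1), j ≠ i, a basis (h_1, ..., h_{p+1}) of F^(p+1), vectors g_i = Σ_{j ≠ i} m_{i,j} h_j, and nonzero scalars a_i, b_i such that a_i h_i + b_i g_i equals one common vector h* for all i ∈ Fin(p+1). If char F = p, then the family (g_1, ..., g_{p+1}) is linearly dependent. -/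
/-- Scalar necessity direction for the class p-non-Fano matroid: under the circuit
constraints of the p-Fano/p-non-Fano matroids, over a field of characteristic p the
family (g_1, ..., g_{p+1}) is forced to be linearly dependent. -/
theorem pNonFano_char_p_forces_dependent (F : Type*) [Field F] (p : ℕ) (hp : p.Prime)
    [CharP F p]
    (m : Fin (p + 1) → Fin (p + 1) → F) (hm : ∀ i j, j ≠ i → m i j ≠ 0)
    (h : Fin (p + 1) → Fin (p + 1) → F)
    (hli : LinearIndependent F h) (hspan : Submodule.span F (Set.range h) = ⊤)
    (g : Fin (p + 1) → Fin (p + 1) → F)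
    (hg : ∀ i, g i = ∑ j ∈ Finset.univ.erase i, m i j • h j)
    (a b : Fin (p + 1) → F) (ha : ∀ i, a i ≠ 0) (hb : ∀ i, b i ≠ 0)
    (hstar : Fin (p + 1) → F) (hhs : ∀ i, a i • h i + b i • g i = hstar) :
    ¬ LinearIndependent F g := by
  classical
  -- build the basis from h
  let B : Module.Basis (Fin (p + 1)) F (Fin (p + 1) → F) := Module.Basis.mk hli (by rw [hspan])
  have hB : ∀ i, B i = h i := fun i => Module.Basis.mk_apply hli _ i
  -- hstar expressed in the basis, for each i
  have hrep : ∀ i : Fin (p + 1), hstar =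
      ∑ j, (if j = i then a i else b i * m i j) • h j := by
    intro i
    rw [← hhs i, hg i]
    rw [← Finset.add_sum_erase _ _ (Finset.mem_univ i)]
    simp only [if_pos rfl]
    congr 1
    rw [Finset.smul_sum]
    refine Finset.sum_congr rfl fun j hj => ?_
    have : j ≠ i := (Finset.mem_erase.mp hj).1
    rw [if_neg this, smul_smul]
  -- so the i-th coordinate of hstar is a i
  have hcoord : ∀ i, B.repr hstar i = a i := by
    intro i
    have := hrep i
    simp only [← hB] at this
    rw [this, B.repr_sum_self]
    simp
  have hstar_eq : hstar = ∑ i, a i • h i := by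
    conv_lhs => rw [← B.sum_repr hstar]
    refine Finset.sum_congr rfl fun i _ => ?_
    rw [hcoord i, hB]
  -- the dependence relation
  have hdep : ∑ i, b i • g i = 0 := by
    have h1 : ∀ i : Fin (p + 1), b i • g i = hstar - a i • h i := by
      intro i
      rw [← hhs i]; abel
    calc ∑ i, b i • g i = ∑ i : Fin (p + 1), (hstar - a i • h i) := by
          exact Finset.sum_congr rfl fun i _ => h1 i
      _ = (p + 1) • hstar - ∑ i, a i • h i := by
          rw [Finset.sum_sub_distrib, Finset.sum_const, Finset.card_univ, Fintype.card_fin]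
      _ = (p + 1) • hstar - hstar := by rw [← hstar_eq]
      _ = p • hstar := by rw [add_smul, one_smul]; abel
      _ = 0 := by
          have : (p : F) = 0 := CharP.cast_eq_zero F p
          rw [← Nat.cast_smul_eq_nsmul F, this, zero_smul]
  intro hgli
  have := Fintype.linearIndependent_iff.mp hgli b hdep 0
  exact hb 0 this
end

section
/- Let p be a prime and F a field with char F ≠ p. Define the same (p+1)×(2p+3) matrix H over F as for the p-Fano representation (columns i ∈ [p+1] equal e_i, columns p+2 ≤ i ≤ 2p+2 equal 𝟙 - e_{2p+3-i}, last column equal 𝟙). Then the first p+1 columns form a basis of F^(p+1), each set of columns ([p+1]\{i}) ∪ {2p+3-i} and {i, 2p+3-i, 2p+3} for i ∈ [p+1] is minimally linearly dependent, and the columns indexed by [p+2 : 2p+2] form a basis of F^(p+1). -/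
/-- The columns of the (p+1)×(2p+3) matrix H_p (0-based indexing):
column k = e_k for k < p+1, column k = 𝟙 - e_{p - (k-(p+1))} for p+1 ≤ k < 2p+2
(so in 1-based terms column p+1+i equals 𝟙 - e_{p+1-i}), and the last column is 𝟙. -/
noncomputable def pFanoCol (F : Type*) [Field F] (p : ℕ) (k : Fin (2 * p + 3)) :
    Fin (p + 1) → F :=
  if hk : (k : ℕ) < p + 1 then Pi.single (⟨k, hk⟩ : Fin (p + 1)) 1
  else if (k : ℕ) < 2 * p + 2 then
    (fun _ => 1) - Pi.single (⟨p - ((k : ℕ) - (p + 1)), by omega⟩ : Fin (p + 1)) 1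
  else fun _ => 1

/-- A finite family of columns is minimally linearly dependent (a circuit):
dependent, but removing any one member leaves an independent family. -/
def MinimallyDependent (F : Type*) [Field F] {ι V : Type*} [DecidableEq ι]
    [AddCommGroup V] [Module F V] (f : ι → V) (s : Finset ι) : Prop :=
  ¬ LinearIndependent F (fun x : s => f x.1) ∧
    ∀ j ∈ s, LinearIndependent F (fun x : (s.erase j) => f x.1)

set_option linter.unusedSectionVars false
set_option maxHeartbeats 1000000

section Helpers
variable {F : Type*} [Field F] {ι κ : Type*} [DecidableEq ι] {V : Type*} [AddCommGroup V]
  [Module F V]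

lemma my_not_li (f : ι → V) (s : Finset ι) (g : ι → F)
    (h0 : ∑ x ∈ s, g x • f x = 0) (hx : ∃ x ∈ s, g x ≠ 0) :
    ¬ LinearIndependent F (fun x : s => f x.1) := by
  rw [Fintype.not_linearIndependent_iff]
  refine ⟨fun x => g x.1, ?_, ?_⟩
  · rw [Finset.univ_eq_attach, Finset.sum_attach s (fun x => g x • f x)]
    exact h0
  · obtain ⟨x, hxs, hgx⟩ := hx; exact ⟨⟨x, hxs⟩, hgx⟩

lemma my_li_comp {f : ι → V} {s : Finset ι} {w : κ → V} (hw : LinearIndependent F w)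
    (φ : s → κ) (hφ : Function.Injective φ) (hc : ∀ x : s, f x.1 = w (φ x)) :
    LinearIndependent F (fun x : s => f x.1) := by
  have : (fun x : s => f x.1) = w ∘ φ := funext hc
  rw [this]; exact hw.comp φ hφ

lemma my_indep_aux {n : ℕ} (v : Fin n → Fin n → F)
    (h : ∀ g : Fin n → F, (∀ r, ∑ m, g m * v m r = 0) → ∀ m, g m = 0) :
    LinearIndependent F v := by
  rw [Fintype.linearIndependent_iff]
  intro g hg
  exact h g (fun r => by simpa [Finset.sum_apply] using congrFun hg r)

lemma my_sum_split {n : ℕ} (g : Fin n → F) (v : Fin n → Fin n → F) (j : Fin n) (r : Fin n)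
    (hstd : ∀ m ≠ j, v m = Pi.single m 1) :
    ∑ m, g m * v m r = (if r ∈ Finset.univ.erase j then g r else 0) + g j * v j r := by
  rw [← Finset.sum_erase_add _ _ (Finset.mem_univ j)]
  congr 1
  rw [← Finset.sum_ite_eq (Finset.univ.erase j) r g]
  refine Finset.sum_congr rfl fun m hm => ?_
  rw [hstd m (Finset.ne_of_mem_erase hm)]
  simp [Pi.single_apply, mul_ite]

lemma my_li_E {n : ℕ} : LinearIndependent F (fun m : Fin n => (Pi.single m 1 : Fin n → F)) := by
  refine my_indep_aux _ fun g hg m => ?_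
  have := hg m
  simp only [Pi.single_apply, mul_ite, mul_one, mul_zero, Finset.sum_ite_eq,
    if_pos (Finset.mem_univ m)] at this
  exact this

lemma my_li_upd {n : ℕ} (j : Fin n) (w : Fin n → F) (hw : w j ≠ 0) :
    LinearIndependent F (Function.update (fun m : Fin n => (Pi.single m 1 : Fin n → F)) j w) := by
  refine my_indep_aux _ fun g hg m => ?_
  have key : ∀ r, (if r ∈ Finset.univ.erase j then g r else 0) + g j * w r = 0 := by
    intro r
    have := hg r
    rwa [my_sum_split g _ j r (fun m hm => Function.update_of_ne hm _ _),
      Function.update_self] at this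
  have hj : g j = 0 := by
    have := key j
    simp only [Finset.mem_erase, ne_eq, not_true_eq_false, false_and, if_false, zero_add] at this
    exact (mul_eq_zero.mp this).resolve_right hw
  by_cases hm : m = j
  · rw [hm]; exact hj
  · have := key m
    rw [hj, zero_mul, add_zero, if_pos (Finset.mem_erase.mpr ⟨hm, Finset.mem_univ m⟩)] at this
    exact this

lemma my_sum_split2 {n : ℕ} (g : Fin n → F) (v : Fin n → Fin n → F) (i j : Fin n)
    (hij : j ≠ i) (r : Fin n) (hstd : ∀ m, m ≠ i → m ≠ j → v m = Pi.single m 1) :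
    ∑ m, g m * v m r =
      (if r ∈ (Finset.univ.erase i).erase j then g r else 0) + g j * v j r + g i * v i r := by
  rw [← Finset.sum_erase_add _ _ (Finset.mem_univ i),
    ← Finset.sum_erase_add _ _ (Finset.mem_erase.mpr ⟨hij, Finset.mem_univ j⟩)]
  congr 1
  congr 1
  rw [← Finset.sum_ite_eq ((Finset.univ.erase i).erase j) r g]
  refine Finset.sum_congr rfl fun m hm => ?_
  have hmj := (Finset.mem_erase.mp hm).1
  have hmi := (Finset.mem_erase.mp (Finset.mem_erase.mp hm).2).1
  rw [hstd m hmi hmj]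
  simp [Pi.single_apply, mul_ite]

lemma my_li_Z {n : ℕ} (i j : Fin n) (hij : j ≠ i) :
    LinearIndependent F (Function.update
      (Function.update (fun m : Fin n => (Pi.single m 1 : Fin n → F)) i (fun _ => 1)) j
      ((fun _ => 1) - Pi.single i 1)) := by
  set v := Function.update
      (Function.update (fun m : Fin n => (Pi.single m 1 : Fin n → F)) i (fun _ => 1)) j
      ((fun _ => 1) - Pi.single i 1) with hv
  refine my_indep_aux _ fun g hg m => ?_
  have hvi : v i = fun _ => 1 := by
    rw [hv, Function.update_of_ne (Ne.symm hij), Function.update_self]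
  have hvj : v j = (fun _ => 1) - Pi.single i 1 := Function.update_self _ _ _
  have key : ∀ r, (if r ∈ (Finset.univ.erase i).erase j then g r else 0)
      + g j * v j r + g i * v i r = 0 := by
    intro r
    rw [← my_sum_split2 g v i j hij r (fun m hmi hmj => by
      rw [hv, Function.update_of_ne hmj, Function.update_of_ne hmi])]
    exact hg r
  have hi : g i = 0 := by
    have := key i
    rw [hvi, hvj] at this
    simp [Pi.single_apply] at this
    exact this
  have hj : g j = 0 := by
    have := key j
    rw [hvi, hvj] at this
    simp [Pi.single_apply, hij, hi] at this
    exact this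
  by_cases hmi : m = i
  · rw [hmi]; exact hi
  by_cases hmj : m = j
  · rw [hmj]; exact hj
  · have := key m
    rw [hvi, hvj, hi, hj] at this
    simpa [Finset.mem_erase, hmi, hmj] using this

lemma my_li_B {n : ℕ} (hn : (n : F) ≠ 1) :
    LinearIndependent F (fun m : Fin n => ((fun _ => 1) - Pi.single m 1 : Fin n → F)) := by
  refine my_indep_aux _ fun g hg m => ?_
  have key : ∀ r, (∑ x, g x) - g r = 0 := by
    intro r
    have h0 := hg r
    simp only [Pi.sub_apply, Pi.single_apply, mul_sub, mul_one, mul_ite, mul_zero] at h0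
    rw [Finset.sum_sub_distrib, Finset.sum_ite_eq, if_pos (Finset.mem_univ r)] at h0
    exact h0
  have hS : ∀ r, g r = ∑ x, g x := fun r => (sub_eq_zero.mp (key r)).symm
  have hsum : (∑ x, g x) = 0 := by
    have h2 : (∑ x : Fin n, g x) = (n : F) * ∑ x, g x := by
      calc (∑ x : Fin n, g x) = ∑ _x : Fin n, ∑ y, g y := Finset.sum_congr rfl fun x _ => hS x
        _ = (n : F) * ∑ y, g y := by rw [Finset.sum_const, Finset.card_univ, Fintype.card_fin,
              nsmul_eq_mul]
    have h3 : ((n : F) - 1) * ∑ x, g x = 0 := by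
      rw [sub_mul, one_mul, ← h2, sub_self]
    exact (mul_eq_zero.mp h3).resolve_left (sub_ne_zero.mpr hn)
  rw [hS m, hsum]

variable {p : ℕ}

lemma pFanoCol_lt (k : Fin (2 * p + 3)) (hk : (k : ℕ) < p + 1) :
    pFanoCol F p k = Pi.single (⟨k, hk⟩ : Fin (p + 1)) 1 := dif_pos hk

lemma pFanoCol_mid (i : Fin (p + 1)) (h : 2 * p + 1 - (i : ℕ) < 2 * p + 3) :
    pFanoCol F p ⟨2 * p + 1 - (i : ℕ), h⟩ = (fun _ => 1) - Pi.single i 1 := by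
  have hi := i.isLt
  rw [pFanoCol, dif_neg (show ¬(2 * p + 1 - (i : ℕ) < p + 1) by omega),
    if_pos (show 2 * p + 1 - (i : ℕ) < 2 * p + 2 by omega)]
  have he : (⟨p - ((2 * p + 1 - (i : ℕ)) - (p + 1)), by omega⟩ : Fin (p + 1)) = i :=
    Fin.ext (show p - ((2 * p + 1 - (i : ℕ)) - (p + 1)) = (i : ℕ) by omega)
  rw [he]

lemma pFanoCol_last (h : 2 * p + 2 < 2 * p + 3) :
    pFanoCol F p ⟨2 * p + 2, h⟩ = fun _ => 1 := by
  rw [pFanoCol, dif_neg (show ¬(2 * p + 2 < p + 1) by omega),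
    if_neg (show ¬(2 * p + 2 < 2 * p + 2) by omega)]

lemma pFanoCol_mid' (j : Fin (p + 1)) (h : p + 1 + (j : ℕ) < 2 * p + 3) :
    pFanoCol F p ⟨p + 1 + (j : ℕ), h⟩ = (fun _ => 1) - Pi.single j.rev 1 := by
  have hj := j.isLt
  rw [pFanoCol, dif_neg (show ¬(p + 1 + (j : ℕ) < p + 1) by omega),
    if_pos (show p + 1 + (j : ℕ) < 2 * p + 2 by omega)]
  have he : (⟨p - ((p + 1 + (j : ℕ)) - (p + 1)), by omega⟩ : Fin (p + 1)) = j.rev :=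
    Fin.ext (show p - ((p + 1 + (j : ℕ)) - (p + 1)) = (j.rev : ℕ) by simp [Fin.rev])
  rw [he]

lemma my_sum_single : (∑ j : Fin (p + 1), (Pi.single j 1 : Fin (p + 1) → F)) = fun _ => 1 := by
  funext r
  simp [Finset.sum_apply, Pi.single_apply, Finset.sum_ite_eq]

lemma my_sum_single_erase (i : Fin (p + 1)) :
    (∑ j ∈ Finset.univ.erase i, (Pi.single j 1 : Fin (p + 1) → F))
      = (fun _ => 1) - Pi.single i 1 := by
  have := Finset.sum_erase_add Finset.univ
    (fun j : Fin (p + 1) => (Pi.single j 1 : Fin (p + 1) → F)) (Finset.mem_univ i)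
  rw [my_sum_single] at this
  rw [← this]; abel
end Helpers

section Parts
variable {F : Type*} [Field F] {p : ℕ}

lemma my_part2_gen (i : Fin (p + 1)) (k₀ : Fin (2 * p + 3))
    (hk₀ : (k₀ : ℕ) = 2 * p + 1 - (i : ℕ)) (emb : Fin (p + 1) → Fin (2 * p + 3))
    (hembv : ∀ j, ((emb j : ℕ)) = (j : ℕ)) :
    MinimallyDependent F (pFanoCol F p)
      (insert k₀ ((Finset.univ.erase i).image emb)) := by
  have hi := i.isLt
  have hk₀' : k₀ = ⟨2 * p + 1 - (i : ℕ), by omega⟩ := Fin.ext hk₀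
  have hfk₀ : pFanoCol F p k₀ = (fun _ => 1) - Pi.single i 1 := by
    rw [hk₀']; exact pFanoCol_mid i _
  have hfemb : ∀ j : Fin (p + 1), pFanoCol F p (emb j) = Pi.single j 1 := by
    intro j
    rw [pFanoCol_lt (emb j) (by rw [hembv]; exact j.isLt)]
    exact congrArg (fun t : Fin (p + 1) => Pi.single t 1) (Fin.ext (hembv j))
  have hembinj : Function.Injective emb := fun a b h => by
    apply Fin.ext; rw [← hembv a, ← hembv b, h]
  have hk0img : k₀ ∉ (Finset.univ.erase i).image emb := by
    rw [Finset.mem_image]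
    rintro ⟨j, -, hj⟩
    have hv := hembv j
    rw [hj, hk₀] at hv
    have := j.isLt
    omega
  constructor
  · refine my_not_li _ _ (fun k => if (k : ℕ) < p + 1 then (-1 : F) else 1) ?_
      ⟨k₀, Finset.mem_insert_self _ _, by
        show (if (k₀ : ℕ) < p + 1 then (-1 : F) else 1) ≠ 0
        rw [if_neg (by omega)]; exact one_ne_zero⟩
    rw [Finset.sum_insert hk0img, Finset.sum_image (fun a _ b _ h => hembinj h)]
    have h1 : ∀ j ∈ Finset.univ.erase i,
        (if ((emb j : ℕ)) < p + 1 then (-1:F) else 1) • pFanoCol F p (emb j)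
          = -(Pi.single j 1 : Fin (p+1) → F) := by
      intro j _
      rw [hfemb j, if_pos (by rw [hembv]; exact j.isLt), neg_one_smul]
    rw [Finset.sum_congr rfl h1]
    show (if (k₀ : ℕ) < p + 1 then (-1 : F) else 1) • pFanoCol F p k₀
      + ∑ x ∈ Finset.univ.erase i, -(Pi.single x 1 : Fin (p + 1) → F) = 0
    rw [if_neg (by omega), hfk₀, one_smul, Finset.sum_neg_distrib, my_sum_single_erase]
    abel
  · intro j hj
    rcases Finset.mem_insert.mp hj with rfl | hjimg
    · rw [Finset.erase_insert hk0img]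
      refine my_li_comp my_li_E
        (fun x => if h : ((x.1 : ℕ)) < p + 1 then (⟨x.1, h⟩ : Fin (p + 1)) else ⟨0, by omega⟩)
        ?_ ?_
      · intro x y hxy
        beta_reduce at hxy
        obtain ⟨jx, -, hjx⟩ := Finset.mem_image.mp x.2
        obtain ⟨jy, -, hjy⟩ := Finset.mem_image.mp y.2
        have hx : ((x.1 : ℕ)) < p + 1 := by rw [← hjx, hembv]; exact jx.isLt
        have hy : ((y.1 : ℕ)) < p + 1 := by rw [← hjy, hembv]; exact jy.isLt
        rw [dif_pos hx, dif_pos hy] at hxy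
        exact Subtype.ext (Fin.ext (show ((x.1 : ℕ)) = ((y.1 : ℕ)) by simpa using hxy))
      · intro x
        beta_reduce
        obtain ⟨jx, -, hjx⟩ := Finset.mem_image.mp x.2
        have hx : ((x.1 : ℕ)) < p + 1 := by rw [← hjx, hembv]; exact jx.isLt
        rw [dif_pos hx, pFanoCol_lt x.1 hx]
    · obtain ⟨m, hm, rfl⟩ := Finset.mem_image.mp hjimg
      have hmi : m ≠ i := (Finset.mem_erase.mp hm).1
      have hwm : ((fun _ => 1) - Pi.single i 1 : Fin (p+1) → F) m ≠ 0 := by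
        simp [Pi.single_apply, hmi]
      have hmem : ∀ x : Fin (2*p+3),
          x ∈ (insert k₀ ((Finset.univ.erase i).image emb)).erase (emb m) →
          (((x:ℕ) < p+1 → (x:ℕ) ≠ (m:ℕ)) ∧ (¬((x:ℕ) < p+1) → x = k₀)) := by
        intro x hx
        have hx1 := (Finset.mem_erase.mp hx).1
        rcases Finset.mem_insert.mp (Finset.mem_erase.mp hx).2 with rfl | hximg
        · exact ⟨fun h => absurd h (by omega), fun _ => rfl⟩
        · obtain ⟨j', -, rfl⟩ := Finset.mem_image.mp hximg
          refine ⟨fun _ hvm => hx1 ?_, fun h => absurd (by rw [hembv]; exact j'.isLt) h⟩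
          exact congrArg emb (Fin.ext (by rw [← hembv j', ← hembv m] at *; exact hvm))
      refine my_li_comp (my_li_upd m _ hwm)
        (fun x => if h : ((x.1 : ℕ)) < p + 1 then (⟨x.1, h⟩ : Fin (p + 1)) else m) ?_ ?_
      · intro x y hxy
        beta_reduce at hxy
        have hx := hmem x.1 x.2
        have hy := hmem y.1 y.2
        by_cases h1 : ((x.1:ℕ)) < p+1 <;> by_cases h2 : ((y.1:ℕ)) < p+1
        · rw [dif_pos h1, dif_pos h2] at hxy
          exact Subtype.ext (Fin.ext (show ((x.1 : ℕ)) = ((y.1 : ℕ)) by simpa using hxy))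
        · rw [dif_pos h1, dif_neg h2] at hxy
          exact absurd (show ((x.1 : ℕ)) = ((m : ℕ)) from congrArg Fin.val hxy) (hx.1 h1)
        · rw [dif_neg h1, dif_pos h2] at hxy
          exact absurd (show ((y.1 : ℕ)) = ((m : ℕ)) from congrArg Fin.val hxy.symm) (hy.1 h2)
        · exact Subtype.ext ((hx.2 h1).trans (hy.2 h2).symm)
      · intro x
        beta_reduce
        have hx := hmem x.1 x.2
        by_cases h1 : ((x.1:ℕ)) < p+1
        · rw [dif_pos h1, Function.update_of_ne
            (show (⟨x.1, h1⟩ : Fin (p+1)) ≠ m from fun hcc => (hx.1 h1) (congrArg Fin.val hcc)),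
            pFanoCol_lt x.1 h1]
        · rw [dif_neg h1, Function.update_self, hx.2 h1]
          exact hfk₀
end Parts

section Part3
variable {F : Type*} [Field F] {p : ℕ}

lemma my_part3_gen (hp2 : 2 ≤ p) (i : Fin (p + 1)) (a b c : Fin (2 * p + 3))
    (ha : (a : ℕ) = (i : ℕ)) (hb : (b : ℕ) = 2 * p + 1 - (i : ℕ)) (hc : (c : ℕ) = 2 * p + 2) :
    MinimallyDependent F (pFanoCol F p) ({a, b, c} : Finset (Fin (2 * p + 3))) := by
  have hi := i.isLt
  have hab : a ≠ b := fun h => by rw [h] at ha; omega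
  have hac : a ≠ c := fun h => by rw [h] at ha; omega
  have hbc : b ≠ c := fun h => by rw [h] at hb; omega
  have hfa : pFanoCol F p a = Pi.single i 1 := by
    rw [pFanoCol_lt a (by omega)]
    exact congrArg (fun t : Fin (p + 1) => Pi.single t 1) (Fin.ext ha)
  have hfb : pFanoCol F p b = (fun _ => 1) - Pi.single i 1 := by
    rw [show b = ⟨2 * p + 1 - (i : ℕ), by omega⟩ from Fin.ext hb]
    exact pFanoCol_mid i _
  have hfc : pFanoCol F p c = fun _ => 1 := by
    rw [show c = ⟨2 * p + 2, by omega⟩ from Fin.ext hc]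
    exact pFanoCol_last _
  obtain ⟨j₀, hj₀⟩ : ∃ j₀ : Fin (p + 1), j₀ ≠ i := by
    rcases Nat.eq_zero_or_pos (i : ℕ) with h | h
    · exact ⟨⟨1, by omega⟩, fun hcc => by
        have h1 : (1 : ℕ) = (i : ℕ) := congrArg Fin.val hcc; omega⟩
    · exact ⟨⟨0, by omega⟩, fun hcc => by
        have h1 : (0 : ℕ) = (i : ℕ) := congrArg Fin.val hcc; omega⟩
  have hmem3 : ∀ x : Fin (2 * p + 3), x ∈ ({a, b, c} : Finset (Fin (2 * p + 3)))
      ↔ (x = a ∨ x = b ∨ x = c) := by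
    intro x; simp [Finset.mem_insert]
  constructor
  · refine my_not_li _ _ (fun k => if (k : ℕ) = 2 * p + 2 then (-1 : F) else 1) ?_
      ⟨c, (hmem3 c).mpr (Or.inr (Or.inr rfl)), by
        show (if (c : ℕ) = 2 * p + 2 then (-1 : F) else 1) ≠ 0
        rw [if_pos hc]; exact neg_ne_zero.mpr one_ne_zero⟩
    rw [Finset.sum_insert (by simp [hab, hac]), Finset.sum_insert (by simp [hbc]),
      Finset.sum_singleton]
    show (if (a : ℕ) = 2 * p + 2 then (-1 : F) else 1) • pFanoCol F p a
      + ((if (b : ℕ) = 2 * p + 2 then (-1 : F) else 1) • pFanoCol F p b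
      + (if (c : ℕ) = 2 * p + 2 then (-1 : F) else 1) • pFanoCol F p c) = 0
    rw [if_neg (by omega), if_neg (by omega), if_pos hc, hfa, hfb, hfc, one_smul, one_smul,
      neg_one_smul]
    abel
  · intro j hj
    rcases (hmem3 j).mp hj with h | h | h
    all_goals subst j
    · -- erase a, remaining b c : use Z family
      have hmem : ∀ x : Fin (2 * p + 3), x ∈ ({a, b, c} : Finset (Fin (2 * p + 3))).erase a →
          (x = b ∨ x = c) := by
        intro x hx
        rcases (hmem3 x).mp (Finset.mem_erase.mp hx).2 with h | h | h
        · exact absurd h (Finset.mem_erase.mp hx).1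
        · exact Or.inl h
        · exact Or.inr h
      refine my_li_comp (my_li_Z i j₀ hj₀)
        (fun x => if ((x.1 : ℕ)) = 2 * p + 2 then i else j₀) ?_ ?_
      · intro x y hxy
        beta_reduce at hxy
        rcases hmem x.1 x.2 with h1 | h1 <;> rcases hmem y.1 y.2 with h2 | h2
        · exact Subtype.ext (h1.trans h2.symm)
        · rw [if_neg (by rw [h1]; omega), if_pos (by rw [h2]; exact hc)] at hxy
          exact absurd hxy hj₀
        · rw [if_pos (by rw [h1]; exact hc), if_neg (by rw [h2]; omega)] at hxy
          exact absurd hxy.symm hj₀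
        · exact Subtype.ext (h1.trans h2.symm)
      · intro x
        beta_reduce
        rcases hmem x.1 x.2 with h1 | h1
        · rw [h1, hfb, if_neg (by omega), Function.update_self]
        · rw [h1, hfc, if_pos hc, Function.update_of_ne (Ne.symm hj₀), Function.update_self]
    · -- erase b, remaining a c
      have hmem : ∀ x : Fin (2 * p + 3), x ∈ ({a, b, c} : Finset (Fin (2 * p + 3))).erase b →
          (x = a ∨ x = c) := by
        intro x hx
        rcases (hmem3 x).mp (Finset.mem_erase.mp hx).2 with h | h | h
        · exact Or.inl h
        · exact absurd h (Finset.mem_erase.mp hx).1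
        · exact Or.inr h
      refine my_li_comp (my_li_upd j₀ (fun _ => (1 : F)) one_ne_zero)
        (fun x => if ((x.1 : ℕ)) = 2 * p + 2 then j₀ else i) ?_ ?_
      · intro x y hxy
        beta_reduce at hxy
        rcases hmem x.1 x.2 with h1 | h1 <;> rcases hmem y.1 y.2 with h2 | h2
        · exact Subtype.ext (h1.trans h2.symm)
        · rw [if_neg (by rw [h1]; omega), if_pos (by rw [h2]; exact hc)] at hxy
          exact absurd hxy.symm hj₀
        · rw [if_pos (by rw [h1]; exact hc), if_neg (by rw [h2]; omega)] at hxy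
          exact absurd hxy hj₀
        · exact Subtype.ext (h1.trans h2.symm)
      · intro x
        beta_reduce
        rcases hmem x.1 x.2 with h1 | h1
        · rw [h1, hfa, if_neg (by omega), Function.update_of_ne (Ne.symm hj₀)]
        · rw [h1, hfc, if_pos hc, Function.update_self]
    · -- erase c, remaining a b
      have hmem : ∀ x : Fin (2 * p + 3), x ∈ ({a, b, c} : Finset (Fin (2 * p + 3))).erase c →
          (x = a ∨ x = b) := by
        intro x hx
        rcases (hmem3 x).mp (Finset.mem_erase.mp hx).2 with h | h | h
        · exact Or.inl h
        · exact Or.inr h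
        · exact absurd h (Finset.mem_erase.mp hx).1
      have hwj : ((fun _ => 1) - Pi.single i 1 : Fin (p + 1) → F) j₀ ≠ 0 := by
        simp [Pi.single_apply, hj₀]
      refine my_li_comp (my_li_upd j₀ _ hwj)
        (fun x => if ((x.1 : ℕ)) < p + 1 then i else j₀) ?_ ?_
      · intro x y hxy
        beta_reduce at hxy
        rcases hmem x.1 x.2 with h1 | h1 <;> rcases hmem y.1 y.2 with h2 | h2
        · exact Subtype.ext (h1.trans h2.symm)
        · rw [if_pos (by rw [h1]; omega), if_neg (by rw [h2]; omega)] at hxy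
          exact absurd hxy.symm hj₀
        · rw [if_neg (by rw [h1]; omega), if_pos (by rw [h2]; omega)] at hxy
          exact absurd hxy hj₀
        · exact Subtype.ext (h1.trans h2.symm)
      · intro x
        beta_reduce
        rcases hmem x.1 x.2 with h1 | h1
        · rw [h1, hfa, if_pos (by omega), Function.update_of_ne (Ne.symm hj₀)]
        · rw [h1, hfb, if_neg (by omega), Function.update_self]
end Part3

section Final
variable {F : Type*} [Field F] {p : ℕ}

lemma my_part1_li : LinearIndependent F
    (fun i : Fin (p + 1) => pFanoCol F p (Fin.castLE (by omega) i : Fin (2 * p + 3))) := by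
  have hE1 : (fun i : Fin (p + 1) =>
        pFanoCol F p (Fin.castLE (by omega) i : Fin (2 * p + 3)))
      = fun m : Fin (p + 1) => (Pi.single m 1 : Fin (p + 1) → F) := by
    funext i
    exact pFanoCol_lt (Fin.castLE (by omega) i) i.isLt
  rw [hE1]; exact my_li_E

lemma my_part4_li (hn1 : ((p + 1 : ℕ) : F) ≠ 1) : LinearIndependent F
    (fun j : Fin (p + 1) =>
      pFanoCol F p (Fin.castLE (by omega) (Fin.natAdd (p + 1) j) : Fin (2 * p + 3))) := by
  have hE4 : (fun j : Fin (p + 1) =>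
        pFanoCol F p (Fin.castLE (by omega) (Fin.natAdd (p + 1) j) : Fin (2 * p + 3)))
      = (fun m : Fin (p + 1) => ((fun _ => 1) - Pi.single m 1 : Fin (p + 1) → F)) ∘ Fin.rev := by
    funext j
    exact pFanoCol_mid' j _
  rw [hE4]
  exact (my_li_B hn1).comp Fin.rev Fin.rev_injective
end Final


/-- Over a field of characteristic ≠ p (p prime), H_p is a scalar linear representation of
the class p-non-Fano matroid: columns [p+1] form a basis; each ([p+1]\{i}) ∪ {2p+3-i} and
{i, 2p+3-i, 2p+3} is a circuit; and the columns [p+2:2p+2] form a basis of F^(p+1). -/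
theorem pNonFano_matrix_represents (F : Type*) [Field F] (p : ℕ) (hp : p.Prime)
    (hchar : ringChar F ≠ p) :
    (LinearIndependent F
        (fun i : Fin (p + 1) => pFanoCol F p ⟨i, by have := i.isLt; omega⟩) ∧
      Submodule.span F
        (Set.range (fun i : Fin (p + 1) => pFanoCol F p ⟨i, by have := i.isLt; omega⟩)) = ⊤) ∧
    (∀ i : Fin (p + 1), MinimallyDependent F (pFanoCol F p)
      (insert (⟨2 * p + 1 - (i : ℕ), by have := i.isLt; omega⟩ : Fin (2 * p + 3))
        ((Finset.univ.erase i).image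
          (fun j : Fin (p + 1) => (⟨j, by have := j.isLt; omega⟩ : Fin (2 * p + 3)))))) ∧
    (∀ i : Fin (p + 1), MinimallyDependent F (pFanoCol F p)
      ({⟨i, by have := i.isLt; omega⟩, ⟨2 * p + 1 - (i : ℕ), by have := i.isLt; omega⟩,
        ⟨2 * p + 2, by omega⟩} : Finset (Fin (2 * p + 3)))) ∧
    (LinearIndependent F
        (fun j : Fin (p + 1) => pFanoCol F p ⟨p + 1 + (j : ℕ), by have := j.isLt; omega⟩) ∧
      Submodule.span F
        (Set.range
          (fun j : Fin (p + 1) => pFanoCol F p ⟨p + 1 + (j : ℕ), by have := j.isLt; omega⟩)) = ⊤) := by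
  have hp2 : 2 ≤ p := hp.two_le
  have hpF : (p : F) ≠ 0 := by
    intro h
    rcases (Nat.dvd_prime hp).mp ((CharP.cast_eq_zero_iff F (ringChar F) p).mp h) with h1 | h1
    · exact CharP.ringChar_ne_one h1
    · exact hchar h1
  have hn1 : ((p + 1 : ℕ) : F) ≠ 1 := by
    push_cast
    intro h
    exact hpF (by linear_combination h)
  have hcard : Fintype.card (Fin (p + 1)) = Module.finrank F (Fin (p + 1) → F) := by
    simp [Module.finrank_fintype_fun_eq_card]
  refine ⟨⟨my_part1_li, ?_⟩, fun i => ?_, fun i => ?_, my_part4_li hn1, ?_⟩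
  · have hsp := (basisOfLinearIndependentOfCardEqFinrank my_part1_li hcard).span_eq
    rwa [coe_basisOfLinearIndependentOfCardEqFinrank] at hsp
  · exact my_part2_gen i _ rfl _ (fun _ => rfl)
  · exact my_part3_gen hp2 i _ _ _ rfl rfl rfl
  · have hsp := (basisOfLinearIndependentOfCardEqFinrank (my_part4_li hn1) hcard).span_eq
    rwa [coe_basisOfLinearIndependentOfCardEqFinrank] at hsp
end

section
/- Let p be a prime and F a field. Consider the (p+1)×(p+2) matrix over F whose first p+1 columns are 𝟙 - e_i for i ∈ Fin(p+1) and whose last column is 𝟙. If char F = p, then the last column is not in the span of the first p+1 columns; if char F ≠ p, then the last column is in the span of the first p+1 columns. -/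
/-- For the (p+1)×(p+2) matrix whose first p+1 columns are 𝟙 - e_i and last column 𝟙:
over characteristic p the last column is not in the span of the first p+1 columns,
and over characteristic ≠ p it is. -/
theorem pFano_last_column_span (F : Type*) [Field F] (p : ℕ) (hp : p.Prime)
    (v : Fin (p + 1) → Fin (p + 1) → F)
    (hv : ∀ i, v i = (fun _ => 1) - Pi.single i 1) :
    (ringChar F = p →
      ((fun _ => 1) : Fin (p + 1) → F) ∉ Submodule.span F (Set.range v)) ∧
    (ringChar F ≠ p →
      ((fun _ => 1) : Fin (p + 1) → F) ∈ Submodule.span F (Set.range v)) := by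
  have hvij : ∀ i j, v i j = 1 - if i = j then 1 else 0 := by
    intro i j
    rw [hv i]
    simp [Pi.single_apply, Pi.sub_apply, eq_comm]
  constructor
  · intro hchar hmem
    rw [Submodule.mem_span_range_iff_exists_fun] at hmem
    obtain ⟨c, hc⟩ := hmem
    have hj : ∀ j, (∑ i, c i) - c j = 1 := by
      intro j
      have := congrFun hc j
      simp only [Finset.sum_apply, Pi.smul_apply, smul_eq_mul] at this
      rw [← this]
      have step : ∀ x ∈ Finset.univ, c x * v x j = c x - if x = j then c x else 0 := by
        intro x _
        rw [hvij x j]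
        by_cases h : x = j <;> simp [h]
      rw [Finset.sum_congr rfl step, Finset.sum_sub_distrib, Finset.sum_ite_eq']
      simp
    set S := ∑ i, c i with hS
    have hcj : ∀ j, c j = S - 1 := by
      intro j
      linear_combination -(hj j)
    have hsum : S = ((p : F) + 1) * (S - 1) := by
      conv_lhs => rw [hS, Finset.sum_congr rfl (fun j _ => hcj j)]
      rw [Finset.sum_const, Finset.card_univ, Fintype.card_fin, nsmul_eq_mul]
      push_cast
      ring
    haveI : CharP F p := hchar ▸ ringChar.charP F
    have hp0 : (p : F) = 0 := CharP.cast_eq_zero F p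
    rw [hp0] at hsum
    have : (1 : F) = 0 := by linear_combination hsum
    exact one_ne_zero this
  · intro hchar
    have hp0 : (p : F) ≠ 0 := by
      intro h
      have hdvd : ringChar F ∣ p := (CharP.cast_eq_zero_iff F (ringChar F) p).mp h
      rcases (Nat.dvd_prime hp).mp hdvd with h1 | h1
      · exact CharP.ringChar_ne_one h1
      · exact hchar h1
    rw [Submodule.mem_span_range_iff_exists_fun]
    refine ⟨fun _ => (p : F)⁻¹, ?_⟩
    funext j
    simp only [Finset.sum_apply, Pi.smul_apply, smul_eq_mul]
    rw [← Finset.mul_sum]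
    have : (∑ i, v i j) = (p : F) := by
      rw [Finset.sum_congr rfl (fun i _ => hvij i j)]
      rw [Finset.sum_sub_distrib]
      simp [Finset.card_univ]
    rw [this, inv_mul_cancel₀ hp0]
end
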